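/- Let A,B,C₁,C₂ ∈ SL(2,ℂ) with [A,B]·C₁·C₂ = Id, where C₁ is conjugate in SL(2,ℂ) to J₊ and C₂ is conjugate to J₋. If P ∈ SL(2,ℂ) commutes with each of A, B, C₁, C₂, then P = Id or P = −Id. -/

import Mathlib

open Matrix
open scoped commutatorElement

abbrev SL2C := Matrix.SpecialLinearGroup (Fin 2) ℂ

def Jp : SL2C := ⟨!![1, 1; 0, 1], by norm_num [Matrix.det_fin_two_of]⟩

def Jm : SL2C := ⟨!![-1, 1; 0, -1], by norm_num [Matrix.det_fin_two_of]⟩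

lemma upper_of_comm {a t : ℂ} (ht : t ≠ 0) {m : Matrix (Fin 2) (Fin 2) ℂ}
    (h : m * !![a, t; 0, a] = !![a, t; 0, a] * m) :
    m = !![m 0 0, m 0 1; 0, m 0 0] := by
  have h00 := congrFun (congrFun h 0) 0
  have h01 := congrFun (congrFun h 0) 1
  simp [Matrix.mul_apply, Fin.sum_univ_two] at h00 h01
  have h10 : m 1 0 = 0 := by
    have : t * m 1 0 = 0 := by linear_combination -h00
    exact (mul_eq_zero.mp this).resolve_left ht
  have h11 : m 1 1 = m 0 0 := by
    have : t * (m 1 1 - m 0 0) = 0 := by linear_combination -h01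
    exact sub_eq_zero.mp ((mul_eq_zero.mp this).resolve_left ht)
  ext i j
  fin_cases i <;> fin_cases j <;> simp [h10, h11]

lemma conj_comm {G : Type*} [Group G] {P C Q J : G} (h : P * C = C * P) (hQ : Q * J * Q⁻¹ = C) :
    (Q⁻¹ * P * Q) * J = J * (Q⁻¹ * P * Q) := by
  subst hQ
  have : Q⁻¹ * (P * (Q * J * Q⁻¹)) * Q = Q⁻¹ * ((Q * J * Q⁻¹) * P) * Q := by rw [h]
  simpa [mul_assoc] using this

-- trace of conjugate
lemma trace_conj (Q X : SL2C) :
    Matrix.trace ((Q * X * Q⁻¹ : SL2C) : Matrix (Fin 2) (Fin 2) ℂ) =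
    Matrix.trace (X : Matrix (Fin 2) (Fin 2) ℂ) := by
  have : ((Q * X * Q⁻¹ : SL2C) : Matrix (Fin 2) (Fin 2) ℂ)
      = (Q : Matrix (Fin 2) (Fin 2) ℂ) * X * (Q⁻¹ : SL2C) := by simp
  rw [this, Matrix.trace_mul_cycle]
  have : ((Q⁻¹ : SL2C) : Matrix (Fin 2) (Fin 2) ℂ) * Q = 1 := by
    rw [← Matrix.SpecialLinearGroup.coe_mul, inv_mul_cancel]
    simp
  rw [this, one_mul]

/-- If `[A,B]·C₁·C₂ = Id` with `C₁ ∼ J₊` and `C₂ ∼ J₋`, then any `P` commuting with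
`A, B, C₁, C₂` is `±Id`. -/
theorem stmt5 (A B C₁ C₂ : SL2C)
    (h : ⁅A, B⁆ * C₁ * C₂ = 1)
    (hC₁ : IsConj Jp C₁) (hC₂ : IsConj Jm C₂)
    (P : SL2C)
    (hPA : P * A = A * P) (hPB : P * B = B * P)
    (hPC₁ : P * C₁ = C₁ * P) (hPC₂ : P * C₂ = C₂ * P) :
    P = 1 ∨ P = -1 := by
  obtain ⟨Q, hQ⟩ := isConj_iff.mp hC₁
  set P' : SL2C := Q⁻¹ * P * Q with hP'def
  have hPJ : P' * Jp = Jp * P' := conj_comm hPC₁ hQ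
  have hPJm : (P' : Matrix (Fin 2) (Fin 2) ℂ) * !![(1:ℂ),1;0,1] = !![(1:ℂ),1;0,1] * (P' : Matrix (Fin 2) (Fin 2) ℂ) := by
    have := congrArg (fun X : SL2C => (X : Matrix (Fin 2) (Fin 2) ℂ)) hPJ
    simp only [Matrix.SpecialLinearGroup.coe_mul] at this
    exact this
  have hup := upper_of_comm (one_ne_zero) hPJm
  set a := (P' : Matrix (Fin 2) (Fin 2) ℂ) 0 0 with hadef
  set t := (P' : Matrix (Fin 2) (Fin 2) ℂ) 0 1 with htdef
  have hdet : a * a = 1 := by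
    have hd := P'.2
    rw [hup, Matrix.det_fin_two_of] at hd
    linear_combination hd
  have hPQ : P = Q * P' * Q⁻¹ := by simp [hP'def, mul_assoc]
  by_cases ht : t = 0
  · rcases mul_self_eq_one_iff.mp hdet with ha | ha
    · left
      have hP1 : P' = 1 := Subtype.ext (by rw [hup, ht, ha]; ext i j; fin_cases i <;> fin_cases j <;> simp)
      rw [hPQ, hP1, mul_one, mul_inv_cancel]
    · right
      have hP1 : P' = -1 := Subtype.ext (by
        rw [hup, ht, ha]
        show _ = (-1 : Matrix (Fin 2) (Fin 2) ℂ)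
        ext i j; fin_cases i <;> fin_cases j <;> simp [Matrix.one_apply])
      rw [hPQ, hP1]
      simp
  · have key : ∀ M : SL2C, M * P = P * M → ∃ b s : ℂ,
        ((Q⁻¹ * M * Q : SL2C) : Matrix (Fin 2) (Fin 2) ℂ) = !![b, s; 0, b] := by
      intro M hM
      have h1 : (Q⁻¹ * M * Q) * P' = P' * (Q⁻¹ * M * Q) := conj_comm hM hPQ.symm
      have h2 : ((Q⁻¹ * M * Q : SL2C) : Matrix (Fin 2) (Fin 2) ℂ) * !![a, t; 0, a]
          = !![a, t; 0, a] * ((Q⁻¹ * M * Q : SL2C) : Matrix (Fin 2) (Fin 2) ℂ) := by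
        have := congrArg (fun X : SL2C => (X : Matrix (Fin 2) (Fin 2) ℂ)) h1
        simp only [Matrix.SpecialLinearGroup.coe_mul] at this
        rw [hup] at this
        exact this
      exact ⟨_, _, upper_of_comm ht h2⟩
    obtain ⟨b, s, hA⟩ := key A hPA.symm
    obtain ⟨c, u, hB⟩ := key B hPB.symm
    have hABcomm : (Q⁻¹*A*Q) * (Q⁻¹*B*Q) = (Q⁻¹*B*Q) * (Q⁻¹*A*Q) := by
      apply Subtype.ext
      show ((Q⁻¹*A*Q : SL2C) : Matrix (Fin 2) (Fin 2) ℂ) * _ = _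
      simp only [Matrix.SpecialLinearGroup.coe_mul] at *
      rw [hA, hB]
      ext i j
      fin_cases i <;> fin_cases j <;> simp [Matrix.mul_apply, Fin.sum_univ_two] <;> ring
    have hAB : A * B = B * A := by
      have h3 : Q⁻¹ * (A * B) * Q = Q⁻¹ * (B * A) * Q := by
        simpa [mul_assoc] using hABcomm
      have := congrArg (fun X => Q * X * Q⁻¹) h3
      simpa [mul_assoc] using this
    have hcomm1 : ⁅A, B⁆ = 1 := by
      rw [commutatorElement_def, hAB]
      group
    rw [hcomm1, one_mul] at h
    have hC2 : C₂ = C₁⁻¹ := (inv_eq_of_mul_eq_one_right h).symm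
    have hJpinv : Jp⁻¹ = (⟨!![1,-1;0,1], by norm_num [Matrix.det_fin_two_of]⟩ : SL2C) := by
      apply inv_eq_of_mul_eq_one_right
      apply Subtype.ext
      show ((Jp : Matrix (Fin 2) (Fin 2) ℂ)) * _ = 1
      simp only [Jp]
      ext i j; fin_cases i <;> fin_cases j <;> simp [Matrix.mul_apply, Fin.sum_univ_two, Matrix.one_apply]
    have hC1inv : C₂ = Q * Jp⁻¹ * Q⁻¹ := by rw [hC2, ← hQ]; group
    have tr2 : Matrix.trace (C₂ : Matrix (Fin 2) (Fin 2) ℂ) = 2 := by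
      rw [hC1inv, trace_conj, hJpinv]
      show Matrix.trace !![(1:ℂ),-1;0,1] = 2
      simp [Matrix.trace_fin_two_of]; norm_num
    obtain ⟨R, hR⟩ := isConj_iff.mp hC₂
    have trm2 : Matrix.trace (C₂ : Matrix (Fin 2) (Fin 2) ℂ) = -2 := by
      rw [← hR, trace_conj]
      show Matrix.trace !![(-1:ℂ),1;0,-1] = -2
      simp [Matrix.trace_fin_two_of]; norm_num
    rw [tr2] at trm2
    norm_num at trm2
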